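/- Let σ > 0 and α, r ∈ ℝ with Δ := (σ²/2 − α)² + 2σ²r > 0, and let d₁ < d₂ be the roots of P(d) := (σ²/2)d² + (α − σ²/2)d − r, i.e. d₁ = ((σ²/2 − α) − √Δ)/σ², d₂ = ((σ²/2 − α) + √Δ)/σ². Let x, a > 0 and β ∈ ℝ with β < d₂. Let Φ be the standard normal CDF and define H(t) := Φ( (1/(σ√t))·log(a/x) + σ((d₁+d₂)/2 − β)·√t ) for t > 0. Then lim_{t→∞} x^β e^{P(β)t} (1 − H(t)) = 0. -/

import Mathlib

open MeasureTheory Set Filter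

/-- The standard normal cumulative distribution function. -/
noncomputable def stdNormalCDF (y : ℝ) : ℝ :=
  ((ProbabilityTheory.gaussianReal 0 1) (Set.Iic y)).toReal

lemma stdNormalCDF_nonneg (y : ℝ) : 0 ≤ stdNormalCDF y := ENNReal.toReal_nonneg

lemma stdNormalCDF_le_one (y : ℝ) : stdNormalCDF y ≤ 1 := by
  unfold stdNormalCDF
  rw [← ENNReal.toReal_one]
  exact ENNReal.toReal_mono (by simp) prob_le_one

lemma one_sub_stdNormalCDF (y : ℝ) :
    1 - stdNormalCDF y = ((ProbabilityTheory.gaussianReal 0 1) (Set.Ioi y)).toReal := by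
  have h : (Set.Iic y)ᶜ = Set.Ioi y := Set.compl_Iic
  rw [← h, prob_compl_eq_one_sub measurableSet_Iic]
  rw [ENNReal.toReal_sub_of_le prob_le_one (by simp)]
  simp [stdNormalCDF]

lemma hasDerivAt_negexp (u : ℝ) :
    HasDerivAt (fun u : ℝ => -Real.exp (-u ^ 2 / 2)) (u * Real.exp (-u ^ 2 / 2)) u := by
  have h : HasDerivAt (fun u : ℝ => -u ^ 2 / 2) (-u) u := by
    have := (hasDerivAt_pow 2 u).neg.div_const 2
    refine this.congr_deriv ?_; push_cast; ring
  have := (h.exp).neg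
  refine this.congr_deriv ?_; ring

lemma tendsto_negexp : Tendsto (fun u : ℝ => -Real.exp (-u ^ 2 / 2)) atTop (nhds 0) := by
  rw [show (0 : ℝ) = -0 by ring]
  refine (Real.tendsto_exp_atBot.comp ?_).neg
  have : Tendsto (fun u : ℝ => u ^ 2) atTop atTop := tendsto_pow_atTop two_ne_zero
  exact ((tendsto_const_mul_atBot_of_neg (by norm_num : (-(1:ℝ)/2) < 0)).mpr this).congr
    (fun u => by ring)

lemma integrableOn_tail {y : ℝ} (hy : 0 < y) :
    IntegrableOn (fun u : ℝ => u * Real.exp (-u ^ 2 / 2)) (Set.Ioi y) := by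
  refine integrableOn_Ioi_deriv_of_nonneg ?_ (fun u hu => hasDerivAt_negexp u) ?_ tendsto_negexp
  · exact (Real.continuous_exp.comp (by continuity)).neg.continuousWithinAt
  · intro u hu
    have : 0 < u := hy.trans hu
    positivity

lemma integral_tail {y : ℝ} (hy : 0 < y) :
    ∫ u in Set.Ioi y, u * Real.exp (-u ^ 2 / 2) = Real.exp (-y ^ 2 / 2) := by
  have := integral_Ioi_of_hasDerivAt_of_nonneg (g := fun u : ℝ => -Real.exp (-u ^ 2 / 2))
    (g' := fun u => u * Real.exp (-u ^ 2 / 2)) (a := y) (l := 0)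
    ((Real.continuous_exp.comp (by continuity)).neg.continuousWithinAt)
    (fun u hu => hasDerivAt_negexp u)
    (fun u hu => by have : 0 < u := hy.trans hu; positivity) tendsto_negexp
  rw [this]; ring

lemma stdNormalCDF_tail {y : ℝ} (hy : 1 ≤ y) :
    1 - stdNormalCDF y ≤ Real.exp (-y ^ 2 / 2) := by
  have hy0 : (0:ℝ) < y := lt_of_lt_of_le one_pos hy
  rw [one_sub_stdNormalCDF,
    ProbabilityTheory.gaussianReal_apply_eq_integral 0 one_ne_zero (Set.Ioi y),
    ENNReal.toReal_ofReal (setIntegral_nonneg measurableSet_Ioi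
      (fun u _ => ProbabilityTheory.gaussianPDFReal_nonneg 0 1 u))]
  calc ∫ u in Set.Ioi y, ProbabilityTheory.gaussianPDFReal 0 1 u
      ≤ ∫ u in Set.Ioi y, u * Real.exp (-u ^ 2 / 2) := by
        refine setIntegral_mono_on
          ((ProbabilityTheory.integrable_gaussianPDFReal 0 1).restrict)
          (integrableOn_tail hy0) measurableSet_Ioi ?_
        intro u hu
        have hu1 : 1 ≤ u := hy.trans (le_of_lt hu)
        unfold ProbabilityTheory.gaussianPDFReal
        have h2 : (1:ℝ) ≤ Real.sqrt (2 * Real.pi * (1:NNReal)) := by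
          rw [show ((1:NNReal):ℝ) = 1 by simp, mul_one]
          rw [show (1:ℝ) = Real.sqrt 1 by simp]
          exact Real.sqrt_le_sqrt (by nlinarith [Real.pi_gt_three])
        have hinv : (Real.sqrt (2 * Real.pi * (1:NNReal)))⁻¹ ≤ 1 := by
          rw [inv_le_one_iff₀]; right; exact h2
        have hexp : Real.exp (-(u - 0) ^ 2 / (2 * (1:NNReal))) = Real.exp (-u ^ 2 / 2) := by
          norm_num
        rw [hexp]
        calc (Real.sqrt (2 * Real.pi * (1:NNReal)))⁻¹ * Real.exp (-u ^ 2 / 2)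
            ≤ 1 * Real.exp (-u ^ 2 / 2) := by
              apply mul_le_mul_of_nonneg_right hinv (Real.exp_nonneg _)
          _ ≤ u * Real.exp (-u ^ 2 / 2) := by
              apply mul_le_mul_of_nonneg_right hu1 (Real.exp_nonneg _)
    _ = Real.exp (-y ^ 2 / 2) := integral_tail hy0

set_option maxHeartbeats 800000 in
/-- If `β < d₂`, then `x^β e^{P(β)t} (1 − H(t;a)) → 0` as `t → ∞`, where
`H(t;a) = Φ((1/(σ√t)) log(a/x) + σ((d₁+d₂)/2 − β)√t)`. -/
theorem stmt_11 (σ α r : ℝ) (hσ : 0 < σ)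
    (hΔ : 0 < (σ ^ 2 / 2 - α) ^ 2 + 2 * σ ^ 2 * r)
    (d₁ d₂ : ℝ)
    (hd₁ : d₁ = ((σ ^ 2 / 2 - α) - Real.sqrt ((σ ^ 2 / 2 - α) ^ 2 + 2 * σ ^ 2 * r)) / σ ^ 2)
    (hd₂ : d₂ = ((σ ^ 2 / 2 - α) + Real.sqrt ((σ ^ 2 / 2 - α) ^ 2 + 2 * σ ^ 2 * r)) / σ ^ 2)
    (x a β : ℝ) (hx : 0 < x) (ha : 0 < a) (hβ : β < d₂) :
    Tendsto
      (fun t : ℝ =>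
        x ^ β * Real.exp ((σ ^ 2 / 2 * β ^ 2 + (α - σ ^ 2 / 2) * β - r) * t) *
          (1 - stdNormalCDF
            ((1 / (σ * Real.sqrt t)) * Real.log (a / x) +
              σ * ((d₁ + d₂) / 2 - β) * Real.sqrt t)))
      atTop (nhds 0) := by
  set Δe := (σ ^ 2 / 2 - α) ^ 2 + 2 * σ ^ 2 * r with hΔe
  have hσ2 : (0:ℝ) < σ ^ 2 := by positivity
  have hsq : Real.sqrt Δe ^ 2 = Δe := Real.sq_sqrt hΔ.le
  have hs0 : 0 < Real.sqrt Δe := Real.sqrt_pos.mpr hΔ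
  have hm : (d₁ + d₂) / 2 = (σ ^ 2 / 2 - α) / σ ^ 2 := by rw [hd₁, hd₂]; ring
  set Pβ := σ ^ 2 / 2 * β ^ 2 + (α - σ ^ 2 / 2) * β - r with hPβdef
  set c := σ * ((d₁ + d₂) / 2 - β) with hcdef
  set k := Δe / (2 * σ ^ 2) with hkdef
  have hk : 0 < k := by positivity
  have key : Pβ = c ^ 2 / 2 - k := by
    rw [hPβdef, hcdef, hkdef, hm, hΔe]
    field_simp
    ring
  have hxβ : (0:ℝ) < x ^ β := Real.rpow_pos_of_pos hx β
  rcases le_or_gt ((d₁ + d₂) / 2) β with hc | hc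
  · -- c ≤ 0 case : Pβ < 0
    have hβm : β - (d₁ + d₂) / 2 < Real.sqrt Δe / σ ^ 2 := by
      have : d₂ = (d₁ + d₂) / 2 + Real.sqrt Δe / σ ^ 2 := by rw [hd₁, hd₂]; field_simp; ring
      linarith [hβ, this ▸ hβ]
    have hPβneg : Pβ < 0 := by
      rw [key, hcdef, hkdef]
      have h1 : 0 ≤ β - (d₁ + d₂) / 2 := by linarith
      have h2 : (β - (d₁ + d₂) / 2) ^ 2 < (Real.sqrt Δe / σ ^ 2) ^ 2 := by
        apply sq_lt_sq' _ hβm; nlinarith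
      rw [div_pow, hsq] at h2
      have h2' : (β - (d₁ + d₂) / 2) ^ 2 * (σ ^ 2) ^ 2 < Δe :=
        (lt_div_iff₀ (by positivity)).mp h2
      rw [sub_neg, lt_div_iff₀ (by positivity : (0:ℝ) < 2 * σ ^ 2)]
      nlinarith [h2', hσ2]
    have hup : Tendsto (fun t : ℝ => x ^ β * Real.exp (Pβ * t)) atTop (nhds 0) := by
      have h1 : Tendsto (fun t : ℝ => Pβ * t) atTop atBot :=
        (tendsto_const_mul_atBot_of_neg hPβneg).mpr tendsto_id
      have := (Real.tendsto_exp_atBot.comp h1).const_mul (x ^ β)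
      simpa using this
    refine tendsto_of_tendsto_of_tendsto_of_le_of_le' tendsto_const_nhds hup ?_ ?_
    · filter_upwards with t
      have h1 := stdNormalCDF_le_one ((1 / (σ * Real.sqrt t)) * Real.log (a / x) +
        σ * ((d₁ + d₂) / 2 - β) * Real.sqrt t)
      exact mul_nonneg (by positivity) (by linarith)
    · filter_upwards with t
      have h1 : 0 ≤ stdNormalCDF ((1 / (σ * Real.sqrt t)) * Real.log (a / x) +
          σ * ((d₁ + d₂) / 2 - β) * Real.sqrt t) := stdNormalCDF_nonneg _
      have h2 : (0:ℝ) < x ^ β * Real.exp (Pβ * t) := by positivity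
      exact mul_le_of_le_one_right h2.le (by linarith)
  · -- c > 0 case
    have hcpos : 0 < c := mul_pos hσ (by linarith)
    set L := Real.log (a / x) with hLdef
    set q := (1 + |L| / σ) / c with hq
    have hqpos : 0 < q := by positivity
    have hcq : c * q = 1 + |L| / σ := by rw [hq]; field_simp
    set T := max 1 (q ^ 2) with hT
    have hup : Tendsto (fun t : ℝ => x ^ β *
        Real.exp (-k * t - L * c / σ - L ^ 2 / (2 * σ ^ 2 * t))) atTop (nhds 0) := by
      have h1 : Tendsto (fun t : ℝ => -k * t) atTop atBot :=
        (tendsto_const_mul_atBot_of_neg (by linarith)).mpr tendsto_id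
      have h2 : Tendsto (fun t : ℝ => -(L * c / σ) - L ^ 2 / (2 * σ ^ 2 * t)) atTop
          (nhds (-(L * c / σ) - 0)) := by
        refine tendsto_const_nhds.sub ?_
        apply Tendsto.div_atTop tendsto_const_nhds
        exact (tendsto_const_mul_atTop_of_pos (by positivity)).mpr tendsto_id
      have h3 : Tendsto (fun t : ℝ => -k * t - L * c / σ - L ^ 2 / (2 * σ ^ 2 * t))
          atTop atBot :=
        (h2.add_atBot h1).congr (fun t => by ring)
      have := (Real.tendsto_exp_atBot.comp h3).const_mul (x ^ β)
      simpa using this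
    refine tendsto_of_tendsto_of_tendsto_of_le_of_le' tendsto_const_nhds hup ?_ ?_
    · filter_upwards with t
      have h1 := stdNormalCDF_le_one ((1 / (σ * Real.sqrt t)) * Real.log (a / x) +
        σ * ((d₁ + d₂) / 2 - β) * Real.sqrt t)
      exact mul_nonneg (by positivity) (by linarith)
    · filter_upwards [eventually_ge_atTop T] with t ht
      have ht1 : (1:ℝ) ≤ t := le_trans (le_max_left _ _) ht
      have ht0 : (0:ℝ) < t := by linarith
      set s := Real.sqrt t with hsdef
      have hs2 : s ^ 2 = t := Real.sq_sqrt ht0.le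
      have hspos : 0 < s := Real.sqrt_pos.mpr ht0
      have hs1 : 1 ≤ s := by
        rw [show (1:ℝ) = Real.sqrt 1 by simp]; exact Real.sqrt_le_sqrt ht1
      have hsq' : q ≤ s := by
        have : Real.sqrt (q ^ 2) ≤ s := Real.sqrt_le_sqrt (le_trans (le_max_right _ _) ht)
        rwa [Real.sqrt_sq hqpos.le] at this
      set y := (1 / (σ * s)) * L + c * s with hy
      have hy1 : 1 ≤ y := by
        rw [hy]
        have hinv : 1 / (σ * s) ≤ 1 / σ :=
          one_div_le_one_div_of_le hσ (le_mul_of_one_le_right hσ.le hs1)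
        have habs : |1 / (σ * s) * L| ≤ |L| / σ := by
          rw [abs_mul, abs_of_pos (by positivity : (0:ℝ) < 1 / (σ * s))]
          calc 1 / (σ * s) * |L| ≤ 1 / σ * |L| :=
                mul_le_mul_of_nonneg_right hinv (abs_nonneg L)
            _ = |L| / σ := by ring
        have h1 : -(|L| / σ) ≤ 1 / (σ * s) * L := neg_le_of_abs_le habs
        have h2 : c * q ≤ c * s := mul_le_mul_of_nonneg_left hsq' hcpos.le
        linarith
      have htail : 1 - stdNormalCDF y ≤ Real.exp (-y ^ 2 / 2) := stdNormalCDF_tail hy1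
      have hnn : 0 ≤ x ^ β * Real.exp (Pβ * t) := by positivity
      calc x ^ β * Real.exp (Pβ * t) * (1 - stdNormalCDF y)
          ≤ x ^ β * Real.exp (Pβ * t) * Real.exp (-y ^ 2 / 2) :=
            mul_le_mul_of_nonneg_left htail hnn
        _ = x ^ β * Real.exp (-k * t - L * c / σ - L ^ 2 / (2 * σ ^ 2 * t)) := by
            rw [mul_assoc, ← Real.exp_add]
            congr 1
            rw [key, hy, ← hs2]
            field_simp
            ring
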